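/- Upper game-theoretic probability is continuous from above on compact sets: if K₁ ⊇ K₂ ⊇ ⋯ is a decreasing sequence of compact subsets of Π, then UpProb(⋂ᵢ Kᵢ) = lim_{i→∞} UpProb(Kᵢ). -/

import Mathlib

open Filter Topology MeasureTheory
open scoped ENNReal NNReal unitInterval

noncomputable section

/-- Finite prequential sequences: finite sequences of pairs (p, y) with p ∈ [0,1], y ∈ {0,1}. -/
abbrev PreqFin := List (unitInterval × Bool)

/-- The prequential space Π = ([0,1] × {0,1})^∞. -/
abbrev PreqInf := ℕ → unitInterval × Bool

/-- The length-n prefix π^n of π ∈ Π. -/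
def prefixn (π : PreqInf) (n : ℕ) : PreqFin := List.ofFn fun i : Fin n => π i

/-- A non-negative farthingale (values in [0,∞], with the convention 0·∞ = 0):
V(x) = (1-p)·V(x,p,0) + p·V(x,p,1). -/
def IsFarthingale (V : PreqFin → ℝ≥0∞) : Prop :=
  ∀ (x : PreqFin) (p : unitInterval),
    V x = ENNReal.ofReal (1 - (p : ℝ)) * V (x ++ [(p, false)])
        + ENNReal.ofReal (p : ℝ) * V (x ++ [(p, true)])

/-- Upper game-theoretic probability of a prequential event E ⊆ Π. -/
def UpProb (E : Set PreqInf) : ℝ≥0∞ :=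
  sInf {a | ∃ V : PreqFin → ℝ≥0∞, IsFarthingale V ∧ V [] = a ∧
    ∀ π ∈ E, 1 ≤ Filter.limsup (fun n => V (prefixn π n)) Filter.atTop}

/-! ### Auxiliary development -/

open scoped Classical

namespace PreqAux

/-- Weight of the `false` branch. -/
def wA (p : unitInterval) : ℝ≥0∞ := ENNReal.ofReal (1 - (p : ℝ))

/-- Weight of the `true` branch. -/
def wB (p : unitInterval) : ℝ≥0∞ := ENNReal.ofReal (p : ℝ)

lemma wA_add_wB (p : unitInterval) : wA p + wB p = 1 := by
  rw [wA, wB, ← ENNReal.ofReal_add (by linarith [p.2.2]) p.2.1]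
  norm_num

lemma wA_le_one (p : unitInterval) : wA p ≤ 1 :=
  le_trans le_self_add (le_of_eq (wA_add_wB p))

lemma wB_le_one (p : unitInterval) : wB p ≤ 1 :=
  le_trans le_add_self (le_of_eq (wA_add_wB p))

lemma wA_ne_top (p : unitInterval) : wA p ≠ ⊤ := ENNReal.ofReal_ne_top
lemma wB_ne_top (p : unitInterval) : wB p ≠ ⊤ := ENNReal.ofReal_ne_top

lemma wB_eq_zero_iff (p : unitInterval) : wB p = 0 ↔ (p : ℝ) = 0 := by
  rw [wB, ENNReal.ofReal_eq_zero]
  constructor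
  · intro h; exact le_antisymm h p.2.1
  · intro h; exact le_of_eq h

lemma wA_of_zero {p : unitInterval} (h : (p : ℝ) = 0) : wA p = 1 := by
  rw [wA, h]; norm_num

lemma wB_of_zero {p : unitInterval} (h : (p : ℝ) = 0) : wB p = 0 := by
  rw [wB, h]; norm_num

/-- Restated farthingale property. -/
lemma farth_eq {V : PreqFin → ℝ≥0∞} (hV : IsFarthingale V) (x : PreqFin) (p : unitInterval) :
    V x = wA p * V (x ++ [(p, false)]) + wB p * V (x ++ [(p, true)]) := hV x p

/-- Supermartingale (superfarthingale) property. -/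
def IsSuper (S : PreqFin → ℝ≥0∞) : Prop :=
  ∀ (x : PreqFin) (p : unitInterval),
    wA p * S (x ++ [(p, false)]) + wB p * S (x ++ [(p, true)]) ≤ S x

/-! #### Repair: every superfarthingale is dominated by a farthingale with the same
initial value. -/

/-- One-step repair. -/
def step (S : PreqFin → ℝ≥0∞) (x : PreqFin) (p : unitInterval) (y : Bool) (v : ℝ≥0∞) : ℝ≥0∞ :=
  if v = ⊤ then ⊤
  else if (p : ℝ) = 0 then (if y then ⊤ else v)
  else if y then S (x ++ [(p, true)]) +
      (v - (wA p * S (x ++ [(p, false)]) + wB p * S (x ++ [(p, true)]))) / wB p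
  else S (x ++ [(p, false)])

/-- Repair along reversed lists. -/
def repAux (S : PreqFin → ℝ≥0∞) : PreqFin → ℝ≥0∞
  | [] => S []
  | e :: r => step S r.reverse e.1 e.2 (repAux S r)

/-- The repaired farthingale. -/
def rep (S : PreqFin → ℝ≥0∞) (x : PreqFin) : ℝ≥0∞ := repAux S x.reverse

lemma rep_nil (S : PreqFin → ℝ≥0∞) : rep S [] = S [] := rfl

lemma rep_append (S : PreqFin → ℝ≥0∞) (x : PreqFin) (p : unitInterval) (y : Bool) :
    rep S (x ++ [(p, y)]) = step S x p y (rep S x) := by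
  rw [rep, rep, List.reverse_append]
  simp [repAux]

lemma le_step {S : PreqFin → ℝ≥0∞} (hS : IsSuper S) (x : PreqFin) (p : unitInterval) (y : Bool)
    {v : ℝ≥0∞} (hv : S x ≤ v) : S (x ++ [(p, y)]) ≤ step S x p y v := by
  rw [step]
  by_cases hT : v = ⊤
  · simp [hT]
  rw [if_neg hT]
  by_cases h0 : (p : ℝ) = 0
  · rw [if_pos h0]
    cases y
    · simp only [Bool.false_eq_true, if_false]
      have := hS x p
      rw [wA_of_zero h0, wB_of_zero h0, one_mul, zero_mul, add_zero] at this
      exact this.trans hv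
    · simp
  · rw [if_neg h0]
    cases y
    · simp
    · simp only [if_true]
      exact le_self_add

lemma rep_ge {S : PreqFin → ℝ≥0∞} (hS : IsSuper S) : ∀ x, S x ≤ rep S x := by
  intro x
  induction x using List.reverseRecOn with
  | nil => exact le_of_eq (rep_nil S).symm
  | append_singleton x e ih =>
      obtain ⟨p, y⟩ := e
      rw [rep_append]
      exact le_step hS x p y ih

lemma step_top_or {S : PreqFin → ℝ≥0∞} {x : PreqFin} {p : unitInterval} {y : Bool} :
    step S x p y ⊤ = ⊤ := by simp [step]

lemma rep_farth {S : PreqFin → ℝ≥0∞} (hS : IsSuper S) : IsFarthingale (rep S) := by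
  intro x p
  show rep S x = wA p * rep S (x ++ [(p, false)]) + wB p * rep S (x ++ [(p, true)])
  rw [rep_append, rep_append]
  have hv : S x ≤ rep S x := rep_ge hS x
  set v := rep S x with hvdef
  by_cases hT : v = ⊤
  · rw [hT, step_top_or, step_top_or]
    by_cases h0 : (p : ℝ) = 0
    · rw [wA_of_zero h0, wB_of_zero h0, one_mul, zero_mul, add_zero]
    · have hB : wB p ≠ 0 := fun h => h0 ((wB_eq_zero_iff p).mp h)
      rw [ENNReal.mul_top hB, add_top]
  · rw [step, step, if_neg hT, if_neg hT]
    by_cases h0 : (p : ℝ) = 0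
    · rw [if_pos h0, if_pos h0]
      simp only [if_true, Bool.false_eq_true, if_false]
      rw [wA_of_zero h0, wB_of_zero h0, one_mul, zero_mul, add_zero]
    · rw [if_neg h0, if_neg h0]
      simp only [if_true, Bool.false_eq_true, if_false]
      have hB : wB p ≠ 0 := fun h => h0 ((wB_eq_zero_iff p).mp h)
      have hle : wA p * S (x ++ [(p, false)]) + wB p * S (x ++ [(p, true)]) ≤ v :=
        (hS x p).trans hv
      rw [mul_add, ENNReal.mul_div_cancel hB (wB_ne_top p), ← add_assoc,
        add_tsub_cancel_of_le hle]

lemma exists_farth_ge {S : PreqFin → ℝ≥0∞} (hS : IsSuper S) :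
    ∃ V : PreqFin → ℝ≥0∞, IsFarthingale V ∧ (∀ x, S x ≤ V x) ∧ V [] = S [] :=
  ⟨rep S, rep_farth hS, rep_ge hS, rep_nil S⟩

end PreqAux

namespace PreqAux

/-! #### Prefixes and trees -/

lemma length_prefixn (π : PreqInf) (n : ℕ) : (prefixn π n).length = n := by
  simp [prefixn]

lemma prefixn_zero (π : PreqInf) : prefixn π 0 = [] := by simp [prefixn]

lemma prefixn_succ (π : PreqInf) (n : ℕ) : prefixn π (n + 1) = prefixn π n ++ [π n] := by
  rw [prefixn, List.ofFn_succ']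
  simp [prefixn, List.concat_eq_append, Fin.coe_castSucc]

lemma prefixn_take (π : PreqInf) {m n : ℕ} (h : m ≤ n) :
    (prefixn π n).take m = prefixn π m := by
  induction n with
  | zero => interval_cases m; simp [prefixn_zero]
  | succ n ih =>
      rcases Nat.lt_or_ge m (n + 1) with h' | h'
      · have hm : m ≤ n := Nat.lt_succ_iff.mp h'
        rw [prefixn_succ, List.take_append_of_le_length (by rw [length_prefixn]; exact hm),
          ih hm]
      · have : m = n + 1 := le_antisymm h h'
        subst this
        rw [List.take_of_length_le (le_of_eq (length_prefixn π (n+1)))]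

/-- The level-`n` tree of prefixes of a set of paths. -/
def tree (E : Set PreqInf) (n : ℕ) : Set PreqFin := (fun π => prefixn π n) '' E

lemma mem_tree {E : Set PreqInf} {π : PreqInf} (h : π ∈ E) (n : ℕ) :
    prefixn π n ∈ tree E n := ⟨π, h, rfl⟩

lemma tree_mono {E F : Set PreqInf} (h : E ⊆ F) (n : ℕ) : tree E n ⊆ tree F n :=
  Set.image_mono h

lemma length_of_mem_tree {E : Set PreqInf} {x : PreqFin} {n : ℕ} (h : x ∈ tree E n) :
    x.length = n := by
  obtain ⟨π, _, rfl⟩ := h; exact length_prefixn π n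

lemma tree_dropLast {E : Set PreqInf} {x : PreqFin} {e : unitInterval × Bool} {n : ℕ}
    (h : x ++ [e] ∈ tree E (n + 1)) : x ∈ tree E n := by
  obtain ⟨π, hπ, heq⟩ := h
  have heq' : prefixn π (n + 1) = x ++ [e] := heq
  rw [prefixn_succ] at heq'
  have hx : x = prefixn π n := by
    have := congrArg List.dropLast heq'
    rw [List.dropLast_concat, List.dropLast_concat] at this
    exact this.symm
  rw [hx]; exact mem_tree hπ n

/-! #### Basic properties of `UpProb` -/

lemma upProb_mono {E F : Set PreqInf} (h : E ⊆ F) : UpProb E ≤ UpProb F := by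
  apply sInf_le_sInf
  rintro a ⟨V, hV, ha, hsucc⟩
  exact ⟨V, hV, ha, fun π hπ => hsucc π (h hπ)⟩

lemma one_le_limsup_of_eventually {u : ℕ → ℝ≥0∞} {N : ℕ} (h : ∀ n, N ≤ n → 1 ≤ u n) :
    1 ≤ Filter.limsup u Filter.atTop := by
  rw [limsup_eq_iInf_iSup_of_nat]
  refine le_iInf fun n => ?_
  exact le_iSup₂_of_le (max n N) (le_max_left n N) (h _ (le_max_right n N))

lemma upProb_le_one (E : Set PreqInf) : UpProb E ≤ 1 := by
  apply sInf_le
  refine ⟨fun _ => 1, ?_, rfl, ?_⟩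
  · intro x p
    show (1 : ℝ≥0∞) = wA p * 1 + wB p * 1
    rw [mul_one, mul_one, wA_add_wB]
  · intro π _
    exact one_le_limsup_of_eventually (N := 0) (fun n _ => le_rfl)

/-! #### The finite-horizon cover value -/

/-- Backward-recursion value for covering the base set `B` in `k` more steps. -/
def cov (B : Set PreqFin) : ℕ → PreqFin → ℝ≥0∞
  | 0, x => if x ∈ B then 1 else 0
  | k + 1, x => ⨆ p : unitInterval,
      (wA p * cov B k (x ++ [(p, false)]) + wB p * cov B k (x ++ [(p, true)]))

lemma cov_le_one (B : Set PreqFin) : ∀ (k : ℕ) (x : PreqFin), cov B k x ≤ 1 := by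
  intro k
  induction k with
  | zero => intro x; rw [cov]; split <;> simp
  | succ k ih =>
      intro x
      rw [cov]
      refine iSup_le fun p => ?_
      calc wA p * cov B k (x ++ [(p, false)]) + wB p * cov B k (x ++ [(p, true)])
          ≤ wA p * 1 + wB p * 1 := by
            exact add_le_add (mul_le_mul_right (ih _) _) (mul_le_mul_right (ih _) _)
        _ = 1 := by rw [mul_one, mul_one, wA_add_wB]

/-- The supermartingale extending the cover value to all of the tree. -/
def covS (B : Set PreqFin) (m : ℕ) (x : PreqFin) : ℝ≥0∞ :=
  if x.length ≤ m then cov B (m - x.length) x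
  else (if x.take m ∈ B then 1 else 0)

lemma covS_isSuper (B : Set PreqFin) (m : ℕ) : IsSuper (covS B m) := by
  intro x p
  rcases Nat.lt_or_ge x.length m with hlt | hge
  · have h1 : (x ++ [(p, false)]).length ≤ m := by simp; omega
    have h2 : (x ++ [(p, true)]).length ≤ m := by simp; omega
    have hk : m - x.length = (m - (x.length + 1)) + 1 := by omega
    rw [covS, covS, covS, if_pos h1, if_pos h2, if_pos (le_of_lt hlt), hk]
    have hl1 : (x ++ [(p, false)]).length = x.length + 1 := by simp
    have hl2 : (x ++ [(p, true)]).length = x.length + 1 := by simp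
    rw [hl1, hl2, cov]
    exact le_iSup (fun p : unitInterval =>
      wA p * cov B (m - (x.length + 1)) (x ++ [(p, false)]) +
        wB p * cov B (m - (x.length + 1)) (x ++ [(p, true)])) p
  · have h1 : ¬ (x ++ [(p, false)]).length ≤ m := by simp; omega
    have h2 : ¬ (x ++ [(p, true)]).length ≤ m := by simp; omega
    have ht1 : (x ++ [(p, false)]).take m = x.take m :=
      List.take_append_of_le_length hge
    have ht2 : (x ++ [(p, true)]).take m = x.take m :=
      List.take_append_of_le_length hge
    rw [covS, covS, covS, if_neg h1, if_neg h2, ht1, ht2, ← add_mul, wA_add_wB, one_mul]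
    rcases Nat.eq_or_lt_of_le hge with heq | hgt
    · subst heq
      rw [List.take_length, if_pos le_rfl, Nat.sub_self, cov]
    · rw [if_neg (show ¬ x.length ≤ m by omega)]

lemma upProb_le_cov (E : Set PreqInf) (m : ℕ) : UpProb E ≤ cov (tree E m) m [] := by
  obtain ⟨V, hV, hge, hnil⟩ := exists_farth_ge (covS_isSuper (tree E m) m)
  apply sInf_le
  refine ⟨V, hV, ?_, ?_⟩
  · rw [hnil, covS]
    simp
  · intro π hπ
    apply one_le_limsup_of_eventually (N := m)
    intro n hn
    refine le_trans ?_ (hge (prefixn π n))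
    rcases Nat.eq_or_lt_of_le hn with heq | hgt
    · rw [covS, if_pos (by rw [length_prefixn]; omega), length_prefixn, ← heq,
        Nat.sub_self, cov, if_pos (mem_tree hπ m)]
    · rw [covS, if_neg (by rw [length_prefixn]; omega), prefixn_take π (le_of_lt hgt),
        if_pos (mem_tree hπ m)]

end PreqAux

namespace PreqAux

/-! #### Forecasting systems and induced values -/

/-- Node determined by a forecasting system and reversed outcome history. -/
def nodeAux (φ : List Bool → unitInterval) : List Bool → PreqFin
  | [] => []
  | y :: r => nodeAux φ r ++ [(φ r.reverse, y)]

/-- Node determined by a forecasting system `φ` and outcome history `s`. -/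
def node (φ : List Bool → unitInterval) (s : List Bool) : PreqFin := nodeAux φ s.reverse

lemma node_nil (φ : List Bool → unitInterval) : node φ [] = [] := rfl

lemma node_snoc (φ : List Bool → unitInterval) (s : List Bool) (y : Bool) :
    node φ (s ++ [y]) = node φ s ++ [(φ s, y)] := by
  rw [node, node, List.reverse_append]
  simp [nodeAux]

lemma length_node (φ : List Bool → unitInterval) (s : List Bool) :
    (node φ s).length = s.length := by
  induction s using List.reverseRecOn with
  | nil => rfl
  | append_singleton s y ih => rw [node_snoc]; simp [ih]

/-- Generic backward recursion along a forecasting system. -/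
def Rec (φ : List Bool → unitInterval) (g : List Bool → ℝ≥0∞) : ℕ → List Bool → ℝ≥0∞
  | 0, s => g s
  | k + 1, s => wA (φ s) * Rec φ g k (s ++ [false]) + wB (φ s) * Rec φ g k (s ++ [true])

lemma Rec_mono (φ : List Bool → unitInterval) {g h : List Bool → ℝ≥0∞}
    (hg : ∀ s, g s ≤ h s) : ∀ (k : ℕ) (s : List Bool), Rec φ g k s ≤ Rec φ h k s := by
  intro k
  induction k with
  | zero => intro s; exact hg s
  | succ k ih =>
      intro s
      exact add_le_add (mul_le_mul_right (ih _) _) (mul_le_mul_right (ih _) _)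

lemma Rec_add (φ : List Bool → unitInterval) (g h : List Bool → ℝ≥0∞) :
    ∀ (k : ℕ) (s : List Bool),
      Rec φ (fun t => g t + h t) k s = Rec φ g k s + Rec φ h k s := by
  intro k
  induction k with
  | zero => intro s; rfl
  | succ k ih =>
      intro s
      show wA (φ s) * Rec φ (fun t => g t + h t) k (s ++ [false]) +
          wB (φ s) * Rec φ (fun t => g t + h t) k (s ++ [true]) = _
      rw [ih, ih, mul_add, mul_add]
      show _ = wA (φ s) * Rec φ g k (s ++ [false]) + wB (φ s) * Rec φ g k (s ++ [true]) +
        (wA (φ s) * Rec φ h k (s ++ [false]) + wB (φ s) * Rec φ h k (s ++ [true]))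
      ring

lemma Rec_le_one (φ : List Bool → unitInterval) {g : List Bool → ℝ≥0∞}
    (hg : ∀ s, g s ≤ 1) : ∀ (k : ℕ) (s : List Bool), Rec φ g k s ≤ 1 := by
  intro k
  induction k with
  | zero => intro s; exact hg s
  | succ k ih =>
      intro s
      calc wA (φ s) * Rec φ g k (s ++ [false]) + wB (φ s) * Rec φ g k (s ++ [true])
          ≤ wA (φ s) * 1 + wB (φ s) * 1 :=
            add_le_add (mul_le_mul_right (ih _) _) (mul_le_mul_right (ih _) _)
        _ = 1 := by rw [mul_one, mul_one, wA_add_wB]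

lemma Rec_ne_zero (φ : List Bool → unitInterval) {g : List Bool → ℝ≥0∞} :
    ∀ {k : ℕ} {s : List Bool}, Rec φ g k s ≠ 0 → ∃ t, t.length = k ∧ g (s ++ t) ≠ 0 := by
  intro k
  induction k with
  | zero => intro s h; exact ⟨[], rfl, by simpa [Rec] using h⟩
  | succ k ih =>
      intro s h
      have : wA (φ s) * Rec φ g k (s ++ [false]) ≠ 0 ∨
          wB (φ s) * Rec φ g k (s ++ [true]) ≠ 0 := by
        by_contra hc
        push_neg at hc
        exact h (by rw [Rec, hc.1, hc.2, add_zero])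
      rcases this with h' | h'
      · have : Rec φ g k (s ++ [false]) ≠ 0 := fun hz => h' (by rw [hz, mul_zero])
        obtain ⟨t, ht, hg'⟩ := ih this
        exact ⟨false :: t, by simp [ht], by rwa [← List.append_cons] at hg' ⟩
      · have : Rec φ g k (s ++ [true]) ≠ 0 := fun hz => h' (by rw [hz, mul_zero])
        obtain ⟨t, ht, hg'⟩ := ih this
        exact ⟨true :: t, by simp [ht], by rwa [← List.append_cons] at hg' ⟩

lemma Rec_drop (φ : List Bool → unitInterval) {g g' : List Bool → ℝ≥0∞}
    (h : ∀ s y, g' (s ++ [y]) ≤ g s) :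
    ∀ (k : ℕ) (s : List Bool), Rec φ g' (k + 1) s ≤ Rec φ g k s := by
  intro k
  induction k with
  | zero =>
      intro s
      calc wA (φ s) * g' (s ++ [false]) + wB (φ s) * g' (s ++ [true])
          ≤ wA (φ s) * g s + wB (φ s) * g s :=
            add_le_add (mul_le_mul_right (h s false) _) (mul_le_mul_right (h s true) _)
        _ = g s := by rw [← add_mul, wA_add_wB, one_mul]
  | succ k ih =>
      intro s
      exact add_le_add (mul_le_mul_right (ih _) _) (mul_le_mul_right (ih _) _)

/-- Indicator of the node belonging to a set of finite sequences. -/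
def iB (φ : List Bool → unitInterval) (B : Set PreqFin) (s : List Bool) : ℝ≥0∞ :=
  if node φ s ∈ B then 1 else 0

lemma iB_le_one (φ : List Bool → unitInterval) (B : Set PreqFin) (s : List Bool) :
    iB φ B s ≤ 1 := by rw [iB]; split <;> simp

/-! #### Greedy minimax: the cover value is at most the sup over forecasting systems -/

def valE (B : Set PreqFin) (k : ℕ) (x : PreqFin) (p : unitInterval) : ℝ≥0∞ :=
  wA p * cov B k (x ++ [(p, false)]) + wB p * cov B k (x ++ [(p, true)])

lemma cov_succ (B : Set PreqFin) (k : ℕ) (x : PreqFin) :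
    cov B (k + 1) x = ⨆ p : unitInterval, valE B k x p := by
  rw [cov]; rfl

lemma pick_ex {δ : ℝ≥0∞} (hδ : δ ≠ 0) (B : Set PreqFin) (k : ℕ) (x : PreqFin) :
    ∃ p : unitInterval, cov B (k + 1) x ≤ valE B k x p + δ := by
  by_cases h0 : cov B (k + 1) x = 0
  · exact ⟨0, by rw [h0]; exact zero_le⟩
  · have hne : cov B (k + 1) x ≠ ⊤ :=
      ((cov_le_one B _ x).trans_lt ENNReal.one_lt_top).ne
    have hlt : cov B (k + 1) x - δ < cov B (k + 1) x := ENNReal.sub_lt_self hne h0 hδ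
    conv_rhs at hlt => rw [cov_succ]
    obtain ⟨p, hp⟩ := lt_iSup_iff.mp hlt
    exact ⟨p, tsub_le_iff_right.mp hp.le⟩

def pickP (B : Set PreqFin) (δ : ℝ≥0∞) (k : ℕ) (x : PreqFin) : unitInterval :=
  if h : ∃ p : unitInterval, cov B (k + 1) x ≤ valE B k x p + δ then h.choose else 0

lemma pickP_spec {δ : ℝ≥0∞} (hδ : δ ≠ 0) (B : Set PreqFin) (k : ℕ) (x : PreqFin) :
    cov B (k + 1) x ≤ valE B k x (pickP B δ k x) + δ := by
  have h := pick_ex hδ B k x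
  rw [pickP, dif_pos h]
  exact h.choose_spec

/-- Greedy node construction (reversed input). -/
def gN (B : Set PreqFin) (δ : ℝ≥0∞) (m : ℕ) : List Bool → PreqFin
  | [] => []
  | y :: r => gN B δ m r ++ [(pickP B δ (m - r.length - 1) (gN B δ m r), y)]

/-- Greedy forecasting system. -/
def gφ (B : Set PreqFin) (δ : ℝ≥0∞) (m : ℕ) (s : List Bool) : unitInterval :=
  pickP B δ (m - s.length - 1) (gN B δ m s.reverse)

lemma node_gφ (B : Set PreqFin) (δ : ℝ≥0∞) (m : ℕ) :
    ∀ s, node (gφ B δ m) s = gN B δ m s.reverse := by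
  intro s
  induction s using List.reverseRecOn with
  | nil => rfl
  | append_singleton s y ih =>
      rw [node_snoc, ih, List.reverse_append]
      show _ = gN B δ m (y :: s.reverse)
      rw [gN]
      congr 2
      rw [gφ]
      simp

lemma greedy (B : Set PreqFin) {δ : ℝ≥0∞} (hδ : δ ≠ 0) (m : ℕ) :
    ∀ (k : ℕ) (s : List Bool), s.length + k = m →
      cov B k (node (gφ B δ m) s) ≤
        Rec (gφ B δ m) (iB (gφ B δ m) B) k s + k * δ := by
  intro k
  induction k with
  | zero =>
      intro s _
      simp only [Nat.cast_zero, zero_mul, add_zero]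
      rw [cov, Rec, iB]
  | succ k ih =>
      intro s hs
      have hk : m - s.length - 1 = k := by omega
      have hφ : gφ B δ m s = pickP B δ k (node (gφ B δ m) s) := by
        rw [gφ, node_gφ, hk]
      have hspec := pickP_spec hδ B k (node (gφ B δ m) s)
      rw [← hφ] at hspec
      have hstep : valE B k (node (gφ B δ m) s) (gφ B δ m s) =
          wA (gφ B δ m s) * cov B k (node (gφ B δ m) (s ++ [false])) +
          wB (gφ B δ m s) * cov B k (node (gφ B δ m) (s ++ [true])) := by
        rw [valE, node_snoc, node_snoc]
      have h0 : cov B k (node (gφ B δ m) (s ++ [false])) ≤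
          Rec (gφ B δ m) (iB (gφ B δ m) B) k (s ++ [false]) + k * δ :=
        ih (s ++ [false]) (by simp at hs ⊢; omega)
      have h1 : cov B k (node (gφ B δ m) (s ++ [true])) ≤
          Rec (gφ B δ m) (iB (gφ B δ m) B) k (s ++ [true]) + k * δ :=
        ih (s ++ [true]) (by simp at hs ⊢; omega)
      calc cov B (k + 1) (node (gφ B δ m) s)
          ≤ valE B k (node (gφ B δ m) s) (gφ B δ m s) + δ := hspec
        _ = wA (gφ B δ m s) * cov B k (node (gφ B δ m) (s ++ [false])) +
            wB (gφ B δ m s) * cov B k (node (gφ B δ m) (s ++ [true])) + δ := by rw [hstep]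
        _ ≤ wA (gφ B δ m s) * (Rec (gφ B δ m) (iB (gφ B δ m) B) k (s ++ [false]) + k * δ) +
            wB (gφ B δ m s) * (Rec (gφ B δ m) (iB (gφ B δ m) B) k (s ++ [true]) + k * δ) + δ :=
            add_le_add_left
              (add_le_add (mul_le_mul_right h0 _) (mul_le_mul_right h1 _)) δ
        _ = (wA (gφ B δ m s) * Rec (gφ B δ m) (iB (gφ B δ m) B) k (s ++ [false]) +
            wB (gφ B δ m s) * Rec (gφ B δ m) (iB (gφ B δ m) B) k (s ++ [true])) +
            ((wA (gφ B δ m s) + wB (gφ B δ m s)) * (k * δ) + δ) := by ring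
        _ = Rec (gφ B δ m) (iB (gφ B δ m) B) (k + 1) s + (k * δ + δ) := by
            rw [wA_add_wB, one_mul, Rec]
        _ = Rec (gφ B δ m) (iB (gφ B δ m) B) (k + 1) s + (↑(k + 1) : ℝ≥0∞) * δ := by
            rw [Nat.cast_succ, add_mul, one_mul]

lemma cov_le_sup (B : Set PreqFin) (m : ℕ) :
    cov B m [] ≤ ⨆ φ : List Bool → unitInterval, Rec φ (iB φ B) m [] := by
  apply ENNReal.le_of_forall_pos_le_add
  intro ε hε _
  set δ : ℝ≥0∞ := (ε : ℝ≥0∞) / (m + 1) with hδdef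
  have hδ : δ ≠ 0 := by
    rw [hδdef, ne_eq, ENNReal.div_eq_zero_iff]
    push_neg
    exact ⟨ENNReal.coe_ne_zero.mpr hε.ne', by simp⟩
  have h := greedy B hδ m m [] (by simp)
  have hmδ : (m : ℝ≥0∞) * δ ≤ ε := by
    calc (m : ℝ≥0∞) * δ ≤ ((m : ℝ≥0∞) + 1) * δ := mul_le_mul_left le_self_add δ
      _ = (ε : ℝ≥0∞) := by
          rw [hδdef]
          have : ((m : ℝ≥0∞) + 1) ≠ 0 := by simp
          exact ENNReal.mul_div_cancel this (by simp)
  calc cov B m [] ≤ Rec (gφ B δ m) (iB (gφ B δ m) B) m [] + m * δ := h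
    _ ≤ (⨆ φ : List Bool → unitInterval, Rec φ (iB φ B) m []) + m * δ :=
        add_le_add_left (le_iSup (fun φ => Rec φ (iB φ B) m []) (gφ B δ m)) _
    _ ≤ (⨆ φ : List Bool → unitInterval, Rec φ (iB φ B) m []) + ε :=
        add_le_add_right hmδ _

/-! #### The diagonal values and their antitonicity -/

/-- The value of forecasting system `φ` against the level-`m` tree of `K m`. -/
def Fv (K : ℕ → Set PreqInf) (m : ℕ) (φ : List Bool → unitInterval) : ℝ≥0∞ :=
  Rec φ (iB φ (tree (K m) m)) m []

lemma Fv_antitone {K : ℕ → Set PreqInf} (hK : Antitone K) (m : ℕ)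
    (φ : List Bool → unitInterval) : Fv K (m + 1) φ ≤ Fv K m φ := by
  apply Rec_drop
  intro s y
  rw [iB, iB]
  split
  case isTrue h =>
    rw [node_snoc] at h
    rw [if_pos (tree_mono (hK (Nat.le_succ m)) m (tree_dropLast h))]
  case isFalse h => exact zero_le

end PreqAux

namespace PreqAux

/-! #### Topological facts about forecasting systems -/

lemma snoc_inj {α : Type*} {a b : List α} {x y : α} :
    a ++ [x] = b ++ [y] ↔ a = b ∧ x = y := by
  constructor
  · intro h
    constructor
    · have := congrArg List.dropLast h
      rwa [List.dropLast_concat, List.dropLast_concat] at this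
    · have := congrArg List.getLast? h
      rwa [List.getLast?_concat, List.getLast?_concat, Option.some_inj] at this
  · rintro ⟨rfl, rfl⟩; rfl

lemma prefixn_eq_node_iff (π : PreqInf) (φ : List Bool → unitInterval) :
    ∀ (s : List Bool),
      prefixn π s.length = node φ s ↔
        ∀ i, i < s.length → π i = (φ (s.take i), s.getD i false) := by
  intro s
  induction s using List.reverseRecOn with
  | nil => simp [prefixn_zero, node_nil]
  | append_singleton s y ih =>
      have hlen : (s ++ [y]).length = s.length + 1 := by simp
      rw [hlen, prefixn_succ, node_snoc, snoc_inj]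
      constructor
      · rintro ⟨h1, h2⟩ i hi
        rcases Nat.lt_or_ge i s.length with hlt | hge
        · rw [List.take_append_of_le_length hlt.le,
            List.getD_append _ _ _ _ hlt]
          exact (ih.mp h1) i hlt
        · have hieq : i = s.length := by omega
          subst hieq
          rw [List.take_left]
          have : (s ++ [y]).getD s.length false = y := by
            rw [List.getD_eq_getElem _ _ (by simp)]
            exact List.getElem_concat_length rfl _
          rw [this]
          exact h2
      · intro h
        constructor
        · apply ih.mpr
          intro i hi
          have := h i (by omega)
          rwa [List.take_append_of_le_length hi.le,
            List.getD_append _ _ _ _ hi] at this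
        · have := h s.length (by omega)
          rw [List.take_left] at this
          have hy : (s ++ [y]).getD s.length false = y := by
            rw [List.getD_eq_getElem _ _ (by simp)]
            exact List.getElem_concat_length rfl _
          rwa [hy] at this

lemma isClosed_nodeMem {Km : Set PreqInf} (hc : IsCompact Km) (m : ℕ) (s : List Bool) :
    IsClosed {φ : List Bool → unitInterval | node φ s ∈ tree Km m} := by
  by_cases hs : s.length = m
  · subst hs
    have hrep : {φ : List Bool → unitInterval | node φ s ∈ tree Km s.length} =
        (fun (φ : List Bool → unitInterval) (j : Fin s.length) =>
            (φ (s.take (j : ℕ)), s.getD (j : ℕ) false)) ⁻¹'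
          ((fun (π : PreqInf) (j : Fin s.length) => π (j : ℕ)) '' Km) := by
      ext φ
      simp only [Set.mem_setOf_eq, Set.mem_preimage, Set.mem_image, tree]
      constructor
      · rintro ⟨π, hπ, heq⟩
        refine ⟨π, hπ, funext fun j => ?_⟩
        exact ((prefixn_eq_node_iff π φ s).mp heq) (j : ℕ) j.isLt
      · rintro ⟨π, hπ, heq⟩
        exact ⟨π, hπ, (prefixn_eq_node_iff π φ s).mpr fun i hi => congrFun heq ⟨i, hi⟩⟩
    rw [hrep]
    apply IsClosed.preimage
    · exact continuous_pi fun j =>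
        Continuous.prodMk ((continuous_apply _)) continuous_const
    · exact (hc.image (continuous_pi fun j => continuous_apply _)).isClosed
  · have : {φ : List Bool → unitInterval | node φ s ∈ tree Km m} = ∅ := by
      ext φ
      simp only [Set.mem_setOf_eq, Set.mem_empty_iff_false, iff_false]
      intro h
      exact hs (by rw [← length_node φ s]; exact length_of_mem_tree h)
    rw [this]
    exact isClosed_empty

lemma eventually_Rec_le {B : Set PreqFin}
    (hB : ∀ s, IsClosed {φ : List Bool → unitInterval | node φ s ∈ B}) :
    ∀ (k : ℕ) (s : List Bool) (φ₀ : List Bool → unitInterval) (ε : ℝ≥0∞), ε ≠ 0 →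
      ∀ᶠ φ in 𝓝 φ₀, Rec φ (iB φ B) k s ≤ Rec φ₀ (iB φ₀ B) k s + ε := by
  intro k
  induction k with
  | zero =>
      intro s φ₀ ε hε
      by_cases h : node φ₀ s ∈ B
      · refine Filter.Eventually.of_forall fun φ => ?_
        show iB φ B s ≤ iB φ₀ B s + ε
        calc iB φ B s ≤ 1 := iB_le_one φ B s
          _ ≤ iB φ₀ B s + ε := by rw [iB, if_pos h]; exact le_self_add
      · have hmem : {φ : List Bool → unitInterval | node φ s ∈ B}ᶜ ∈ 𝓝 φ₀ :=
          (hB s).isOpen_compl.mem_nhds h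
        filter_upwards [hmem] with φ hφ
        have hφ' : ¬ node φ s ∈ B := hφ
        show iB φ B s ≤ iB φ₀ B s + ε
        rw [iB, if_neg hφ']
        exact zero_le
  | succ k ih =>
      intro s φ₀ ε hε
      by_cases hεtop : ε = ⊤
      · refine Filter.Eventually.of_forall fun φ => ?_
        rw [hεtop]
        exact le_trans le_top le_add_self
      set ε' : ℝ≥0∞ := min 1 (ε / 6) with hε'def
      have hd : (ε : ℝ≥0∞) / 6 ≠ 0 := by
        rw [ne_eq, ENNReal.div_eq_zero_iff]
        push_neg
        exact ⟨hε, by norm_num⟩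
      have hε' : ε' ≠ 0 :=
        ne_of_gt (lt_min one_pos (pos_iff_ne_zero.mpr hd))
      have hε'1 : ε' ≤ 1 := min_le_left _ _
      have h6 : 6 * ε' ≤ ε := by
        calc (6 : ℝ≥0∞) * ε' ≤ 6 * (ε / 6) := mul_le_mul_right (min_le_right _ _) _
          _ = ε := ENNReal.mul_div_cancel (by norm_num) (by norm_num)
      have hcontA : Continuous fun φ : List Bool → unitInterval => wA (φ s) :=
        ENNReal.continuous_ofReal.comp
          (continuous_const.sub (continuous_subtype_val.comp (continuous_apply s)))
      have hcontB : Continuous fun φ : List Bool → unitInterval => wB (φ s) :=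
        ENNReal.continuous_ofReal.comp
          (continuous_subtype_val.comp (continuous_apply s))
      have hltA : wA (φ₀ s) < wA (φ₀ s) + ε' :=
        ENNReal.lt_add_right (wA_ne_top _) hε'
      have hltB : wB (φ₀ s) < wB (φ₀ s) + ε' :=
        ENNReal.lt_add_right (wB_ne_top _) hε'
      have hevA := (hcontA.tendsto φ₀).eventually_lt_const hltA
      have hevB := (hcontB.tendsto φ₀).eventually_lt_const hltB
      have hev0 := ih (s ++ [false]) φ₀ ε' hε'
      have hev1 := ih (s ++ [true]) φ₀ ε' hε'
      filter_upwards [hevA, hevB, hev0, hev1] with φ hA hb hr0 hr1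
      have hR0 : Rec φ₀ (iB φ₀ B) k (s ++ [false]) ≤ 1 :=
        Rec_le_one φ₀ (iB_le_one φ₀ B) k _
      have hR1 : Rec φ₀ (iB φ₀ B) k (s ++ [true]) ≤ 1 :=
        Rec_le_one φ₀ (iB_le_one φ₀ B) k _
      have key : ∀ (A R : ℝ≥0∞), A ≤ 1 → R ≤ 1 →
          (A + ε') * (R + ε') ≤ A * R + 3 * ε' := by
        intro A R hA1 hR1'
        calc (A + ε') * (R + ε') = A * R + (A * ε' + ε' * R + ε' * ε') := by ring
          _ ≤ A * R + (1 * ε' + ε' * 1 + 1 * ε') := by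
              refine add_le_add_right (add_le_add (add_le_add ?_ ?_) ?_) _
              · exact mul_le_mul_left hA1 ε'
              · exact mul_le_mul_right hR1' ε'
              · exact mul_le_mul_left hε'1 ε'
          _ = A * R + 3 * ε' := by ring
      calc wA (φ s) * Rec φ (iB φ B) k (s ++ [false]) +
            wB (φ s) * Rec φ (iB φ B) k (s ++ [true])
          ≤ (wA (φ₀ s) + ε') * (Rec φ₀ (iB φ₀ B) k (s ++ [false]) + ε') +
            (wB (φ₀ s) + ε') * (Rec φ₀ (iB φ₀ B) k (s ++ [true]) + ε') :=
            add_le_add (mul_le_mul' hA.le hr0) (mul_le_mul' hb.le hr1)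
        _ ≤ (wA (φ₀ s) * Rec φ₀ (iB φ₀ B) k (s ++ [false]) + 3 * ε') +
            (wB (φ₀ s) * Rec φ₀ (iB φ₀ B) k (s ++ [true]) + 3 * ε') :=
            add_le_add (key _ _ (wA_le_one _) hR0) (key _ _ (wB_le_one _) hR1)
        _ = (wA (φ₀ s) * Rec φ₀ (iB φ₀ B) k (s ++ [false]) +
            wB (φ₀ s) * Rec φ₀ (iB φ₀ B) k (s ++ [true])) + 6 * ε' := by ring
        _ ≤ Rec φ₀ (iB φ₀ B) (k + 1) s + ε := by
            rw [Rec]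
            exact add_le_add_right h6 _

lemma isClosed_Fv_ge {K : ℕ → Set PreqInf} (hcompact : ∀ i, IsCompact (K i))
    (m : ℕ) (t : ℝ≥0∞) :
    IsClosed {φ : List Bool → unitInterval | t ≤ Fv K m φ} := by
  rw [← isOpen_compl_iff, isOpen_iff_mem_nhds]
  intro φ₀ hφ₀
  simp only [Set.mem_compl_iff, Set.mem_setOf_eq, not_le] at hφ₀
  obtain ⟨t', h1, h2⟩ := exists_between hφ₀
  have hεne : t' - Fv K m φ₀ ≠ 0 := by
    rw [ne_eq, tsub_eq_zero_iff_le]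
    exact not_le.mpr h1
  have hev := eventually_Rec_le (B := tree (K m) m)
    (fun s => isClosed_nodeMem (hcompact m) m s) m [] φ₀ _ hεne
  have hFt : Fv K m φ₀ + (t' - Fv K m φ₀) = t' := add_tsub_cancel_of_le h1.le
  filter_upwards [hev] with φ hφ
  simp only [Set.mem_compl_iff, Set.mem_setOf_eq, not_le]
  calc Fv K m φ ≤ t' := by rw [← hFt]; exact hφ
    _ < t := h2

lemma exists_phi_star {K : ℕ → Set PreqInf} (hcompact : ∀ i, IsCompact (K i))
    (hK : Antitone K) {t : ℝ≥0∞} (hne : ∀ m, ∃ φ, t ≤ Fv K m φ) :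
    ∃ φ, ∀ m, t ≤ Fv K m φ := by
  set A : ℕ → Set (List Bool → unitInterval) := fun m => {φ | t ≤ Fv K m φ} with hA
  have hdec : ∀ m, A (m + 1) ⊆ A m := fun m φ hφ => le_trans hφ (Fv_antitone hK m φ)
  have hclosed : ∀ m, IsClosed (A m) := fun m => isClosed_Fv_ge hcompact m t
  obtain ⟨φ, hφ⟩ := IsCompact.nonempty_iInter_of_sequence_nonempty_isCompact_isClosed A
    hdec (fun m => hne m) (hclosed 0).isCompact hclosed
  exact ⟨φ, fun m => Set.mem_iInter.mp hφ m⟩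

end PreqAux

namespace PreqAux

/-! #### Finite Ville inequality along a forecasting system -/

section Ville

variable (φ : List Bool → unitInterval) (V : PreqFin → ℝ≥0∞) (c : ℝ≥0∞)

/-- The stopping event: the capital exceeded `c` along some prefix. -/
def Hit (s : List Bool) : Prop := ∃ n, n ≤ s.length ∧ c < V (node φ (s.take n))

def iH (s : List Bool) : ℝ≥0∞ := if Hit φ V c s then 1 else 0

def iS (B : Set PreqFin) (s : List Bool) : ℝ≥0∞ :=
  if node φ s ∈ B ∧ ¬ Hit φ V c s then 1 else 0

lemma hit_snoc {s : List Bool} {y : Bool} (h : Hit φ V c s) : Hit φ V c (s ++ [y]) := by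
  obtain ⟨n, hn, hlt⟩ := h
  exact ⟨n, by simp; omega, by rwa [List.take_append_of_le_length hn]⟩

lemma hit_last {s : List Bool} {y : Bool} (h : Hit φ V c (s ++ [y]))
    (hn : ¬ Hit φ V c s) : c < V (node φ (s ++ [y])) := by
  obtain ⟨n, hle, hlt⟩ := h
  have hle' : n ≤ s.length + 1 := by simpa using hle
  rcases Nat.lt_or_ge n (s.length + 1) with hlt' | hge
  · exfalso
    have hns : n ≤ s.length := by omega
    rw [List.take_append_of_le_length hns] at hlt
    exact hn ⟨n, hns, hlt⟩
  · have heq : (s ++ [y]).take n = s ++ [y] := List.take_of_length_le (by simp; omega)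
    rwa [heq] at hlt

lemma iB_le_iH_add_iS (B : Set PreqFin) (s : List Bool) :
    iB φ B s ≤ iH φ V c s + iS φ V c B s := by
  rw [iB, iH, iS]
  by_cases hm : node φ s ∈ B
  · by_cases hh : Hit φ V c s
    · rw [if_pos hm, if_pos hh]; exact le_self_add
    · rw [if_pos hm, if_neg hh, if_pos ⟨hm, hh⟩]; exact le_add_self
  · rw [if_neg hm]; exact zero_le

lemma Rec_iH_of_hit : ∀ (k : ℕ) {s : List Bool}, Hit φ V c s →
    Rec φ (iH φ V c) k s = 1 := by
  intro k
  induction k with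
  | zero =>
      intro s h
      show iH φ V c s = 1
      rw [iH, if_pos h]
  | succ k ih =>
      intro s h
      show wA (φ s) * Rec φ (iH φ V c) k (s ++ [false]) +
          wB (φ s) * Rec φ (iH φ V c) k (s ++ [true]) = 1
      rw [ih (hit_snoc φ V c h), ih (hit_snoc φ V c h), mul_one, mul_one, wA_add_wB]

lemma ville (hV : IsFarthingale V) :
    ∀ (k : ℕ) (s : List Bool), ¬ Hit φ V c s →
      c * Rec φ (iH φ V c) k s ≤ V (node φ s) := by
  intro k
  induction k with
  | zero =>
      intro s hs
      show c * iH φ V c s ≤ V (node φ s)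
      rw [iH, if_neg hs, mul_zero]
      exact zero_le
  | succ k ih =>
      intro s hs
      have hVs := farth_eq hV (node φ s) (φ s)
      rw [← node_snoc, ← node_snoc] at hVs
      have hb : ∀ y, c * Rec φ (iH φ V c) k (s ++ [y]) ≤ V (node φ (s ++ [y])) := by
        intro y
        by_cases hy : Hit φ V c (s ++ [y])
        · rw [Rec_iH_of_hit φ V c k hy, mul_one]
          exact (hit_last φ V c hy hs).le
        · exact ih (s ++ [y]) hy
      calc c * Rec φ (iH φ V c) (k + 1) s
          = wA (φ s) * (c * Rec φ (iH φ V c) k (s ++ [false])) +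
            wB (φ s) * (c * Rec φ (iH φ V c) k (s ++ [true])) := by
            show c * (wA (φ s) * Rec φ (iH φ V c) k (s ++ [false]) +
              wB (φ s) * Rec φ (iH φ V c) k (s ++ [true])) = _
            ring
        _ ≤ wA (φ s) * V (node φ (s ++ [false])) + wB (φ s) * V (node φ (s ++ [true])) :=
            add_le_add (mul_le_mul_right (hb false) _) (mul_le_mul_right (hb true) _)
        _ = V (node φ s) := hVs.symm

lemma ville_root (hV : IsFarthingale V) (m : ℕ) :
    c * Rec φ (iH φ V c) m [] ≤ V [] := by
  by_cases h : Hit φ V c []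
  · rw [Rec_iH_of_hit φ V c m h, mul_one]
    obtain ⟨n, hn, hlt⟩ := h
    have hn0 : n = 0 := Nat.le_zero.mp (by simpa using hn)
    subst hn0
    rw [show ([] : List Bool).take 0 = [] from rfl, node_nil] at hlt
    exact hlt.le
  · have := ville φ V c hV m [] h
    rwa [node_nil] at this

end Ville

/-! #### Infinite bit sequences and their prefixes -/

/-- Length-`n` prefix of an infinite bit sequence. -/
def pfx (y : ℕ → Bool) (n : ℕ) : List Bool := List.ofFn fun j : Fin n => y j

lemma length_pfx (y : ℕ → Bool) (n : ℕ) : (pfx y n).length = n := by simp [pfx]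

lemma pfx_zero (y : ℕ → Bool) : pfx y 0 = [] := by simp [pfx]

lemma pfx_succ (y : ℕ → Bool) (n : ℕ) : pfx y (n + 1) = pfx y n ++ [y n] := by
  rw [pfx, List.ofFn_succ']
  simp [pfx, List.concat_eq_append, Fin.coe_castSucc]

lemma pfx_congr {y z : ℕ → Bool} {m : ℕ} (h : ∀ j, j < m → y j = z j) :
    pfx y m = pfx z m :=
  congrArg List.ofFn (funext fun j => h j j.isLt)

/-- A set of bit sequences determined by the first `m` bits is open. -/
lemma isOpen_detBy {A : Set (ℕ → Bool)} {m : ℕ}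
    (h : ∀ y z : ℕ → Bool, (∀ j, j < m → y j = z j) → y ∈ A → z ∈ A) : IsOpen A := by
  rw [isOpen_iff_mem_nhds]
  intro y hy
  have hN : (⋂ j ∈ Finset.range m, {z : ℕ → Bool | z j = y j}) ∈ 𝓝 y := by
    refine (isOpen_biInter_finset fun j _ => ?_).mem_nhds ?_
    · have hset : {z : ℕ → Bool | z j = y j} = (fun z : ℕ → Bool => z j) ⁻¹' {y j} := rfl
      rw [hset]
      exact (isOpen_discrete _).preimage (continuous_apply j)
    · simp
  refine Filter.mem_of_superset hN ?_
  intro z hz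
  simp only [Set.mem_iInter, Set.mem_setOf_eq] at hz
  exact h y z (fun j hj => (hz j (Finset.mem_range.mpr hj)).symm) hy

lemma prefixn_eq_iff {π' π : PreqInf} {m : ℕ} :
    prefixn π' m = prefixn π m ↔ ∀ j, j < m → π' j = π j := by
  rw [prefixn, prefixn, List.ofFn_inj]
  constructor
  · intro h j hj; exact congrFun h ⟨j, hj⟩
  · intro h; funext j; exact h j j.isLt

/-! #### The König-type endgame -/

lemma core_contradiction {K : ℕ → Set PreqInf} (hcompact : ∀ i, IsCompact (K i))
    (hK : Antitone K) {V : PreqFin → ℝ≥0∞} (hV : IsFarthingale V)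
    (hsucc : ∀ π ∈ ⋂ i, K i, 1 ≤ Filter.limsup (fun n => V (prefixn π n)) Filter.atTop)
    {c : ℝ≥0∞} (hc1 : c < 1) (φ : List Bool → unitInterval) :
    ∃ m, Rec φ (iS φ V c (tree (K m) m)) m [] = 0 := by
  by_contra hcon
  push_neg at hcon
  have hstr : ∀ m, ∃ s : List Bool, s.length = m ∧
      node φ s ∈ tree (K m) m ∧ ¬ Hit φ V c s := by
    intro m
    obtain ⟨t, ht, hne⟩ := Rec_ne_zero φ (hcon m)
    rw [List.nil_append] at hne
    by_cases hcond : node φ t ∈ tree (K m) m ∧ ¬ Hit φ V c t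
    · exact ⟨t, ht, hcond.1, hcond.2⟩
    · exact absurd (by rw [iS, if_neg hcond]) hne
  set E : ℕ → Set (ℕ → Bool) := fun m =>
    {y | node φ (pfx y m) ∈ tree (K m) m ∧ ¬ Hit φ V c (pfx y m)} with hE
  have hEdec : ∀ m, E (m + 1) ⊆ E m := by
    intro m y hy
    obtain ⟨h1, h2⟩ := hy
    rw [pfx_succ] at h1 h2
    constructor
    · rw [node_snoc] at h1
      exact tree_mono (hK (Nat.le_succ m)) m (tree_dropLast h1)
    · intro hh
      exact h2 (hit_snoc φ V c hh)
  have hEne : ∀ m, (E m).Nonempty := by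
    intro m
    obtain ⟨s, hlen, hmem, hhit⟩ := hstr m
    have hp : pfx (fun n => s.getD n false) m = s := by
      refine List.ext_getElem (by simp [length_pfx, hlen]) ?_
      intro n h1 h2
      simp only [pfx, List.getElem_ofFn]
      exact List.getD_eq_getElem s false h2
    exact ⟨fun n => s.getD n false, by rw [Set.mem_setOf_eq, hp]; exact ⟨hmem, hhit⟩⟩
  have hEclosed : ∀ m, IsClosed (E m) := by
    intro m
    rw [← isOpen_compl_iff]
    apply isOpen_detBy (m := m)
    intro y z hyz hy
    have hpp : pfx y m = pfx z m := pfx_congr hyz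
    simp only [Set.mem_compl_iff, hE, Set.mem_setOf_eq] at hy ⊢
    rwa [← hpp]
  obtain ⟨y, hy⟩ := IsCompact.nonempty_iInter_of_sequence_nonempty_isCompact_isClosed E
    hEdec hEne (hEclosed 0).isCompact hEclosed
  have hyE : ∀ m, y ∈ E m := fun m => Set.mem_iInter.mp hy m
  set π : PreqInf := fun n => (φ (pfx y n), y n) with hπ
  have hpref : ∀ n, prefixn π n = node φ (pfx y n) := by
    intro n
    induction n with
    | zero => rw [prefixn_zero, pfx_zero, node_nil]
    | succ n ih => rw [prefixn_succ, ih, pfx_succ, node_snoc]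
  have hmem : ∀ i, π ∈ K i := by
    intro i
    set D : ℕ → Set PreqInf := fun m => K i ∩ {π' | prefixn π' m = prefixn π m} with hD
    have hDdec : ∀ m, D (m + 1) ⊆ D m := by
      intro m π' hm'
      obtain ⟨h1, h2⟩ := hm'
      refine ⟨h1, ?_⟩
      have := congrArg (List.take m) h2
      rwa [prefixn_take _ (Nat.le_succ m), prefixn_take _ (Nat.le_succ m)] at this
    have hDne : ∀ m, (D m).Nonempty := by
      intro m
      have h1 : prefixn π (max m i) ∈ tree (K (max m i)) (max m i) := by
        rw [hpref]; exact (hyE (max m i)).1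
      have h2 : prefixn π (max m i) ∈ tree (K i) (max m i) :=
        tree_mono (hK (le_max_right m i)) _ h1
      obtain ⟨π', hπ', heq⟩ := h2
      refine ⟨π', hπ', ?_⟩
      show prefixn π' m = prefixn π m
      have heq' : prefixn π' (max m i) = prefixn π (max m i) := heq
      have := congrArg (List.take m) heq'
      rwa [prefixn_take _ (le_max_left m i), prefixn_take _ (le_max_left m i)] at this
    have hDclosed : ∀ m, IsClosed (D m) := by
      intro m
      refine ((hcompact i).isClosed).inter ?_
      have hset : {π' : PreqInf | prefixn π' m = prefixn π m} =
          ⋂ (j : ℕ), ⋂ (_ : j < m), {π' : PreqInf | π' j = π j} := by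
        ext π'
        simp only [Set.mem_setOf_eq, Set.mem_iInter]
        exact prefixn_eq_iff
      rw [hset]
      exact isClosed_iInter fun j => isClosed_iInter fun _ =>
        isClosed_eq (continuous_apply j) continuous_const
    obtain ⟨π', hπ'⟩ := IsCompact.nonempty_iInter_of_sequence_nonempty_isCompact_isClosed D
      hDdec hDne ((hDclosed 0).isCompact) hDclosed
    have hππ : π' = π := funext fun n =>
      prefixn_eq_iff.mp (Set.mem_iInter.mp hπ' (n + 1)).2 n (Nat.lt_succ_self n)
    have := (Set.mem_iInter.mp hπ' 0).1
    rwa [← hππ]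
  have hπK : π ∈ ⋂ i, K i := Set.mem_iInter.mpr hmem
  have hls := hsucc π hπK
  have hex : ∃ n, c < V (prefixn π n) := by
    have h1 : c < Filter.limsup (fun n => V (prefixn π n)) Filter.atTop :=
      lt_of_lt_of_le hc1 hls
    rw [limsup_eq_iInf_iSup_of_nat] at h1
    have h2 : c < ⨆ i, ⨆ (_ : i ≥ 0), V (prefixn π i) :=
      lt_of_lt_of_le h1 (iInf_le _ 0)
    obtain ⟨i, hi⟩ := lt_iSup_iff.mp h2
    rw [iSup_pos (Nat.zero_le i)] at hi
    exact ⟨i, hi⟩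
  obtain ⟨n, hn⟩ := hex
  have hhit : Hit φ V c (pfx y n) := by
    refine ⟨n, by rw [length_pfx], ?_⟩
    rw [List.take_of_length_le (le_of_eq (length_pfx y n))]
    rwa [← hpref]
  exact (hyE n).2 hhit

end PreqAux

namespace PreqAux

/-- The hard direction: the limit of `UpProb (K i)` is at most `UpProb (⋂ i, K i)`. -/
lemma iInf_upProb_le {K : ℕ → Set PreqInf} (hcompact : ∀ i, IsCompact (K i))
    (hK : Antitone K) : (⨅ i, UpProb (K i)) ≤ UpProb (⋂ i, K i) := by
  set L := ⨅ i, UpProb (K i) with hLdef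
  have hL1 : L ≤ 1 := le_trans (iInf_le _ 0) (upProb_le_one _)
  rw [UpProb]
  refine le_sInf ?_
  rintro a ⟨V, hV, rfl, hsucc⟩
  have key : ∀ c : ℝ≥0∞, c ≠ 0 → c < 1 → c * L ≤ V [] := by
    intro c hc0 hc1
    by_contra hcon
    push_neg at hcon
    have hLm : ∀ m, L ≤ ⨆ φ : List Bool → unitInterval, Fv K m φ := by
      intro m
      calc L ≤ UpProb (K m) := iInf_le _ m
        _ ≤ cov (tree (K m) m) m [] := upProb_le_cov (K m) m
        _ ≤ ⨆ φ : List Bool → unitInterval, Fv K m φ := cov_le_sup _ m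
    have hcltop : c ≠ ⊤ := ne_top_of_lt hc1
    have hdiv : V [] / c < L := by
      rw [ENNReal.div_lt_iff (Or.inl hc0) (Or.inl hcltop), mul_comm]
      exact hcon
    obtain ⟨t, ht1, ht2⟩ := exists_between hdiv
    have hne : ∀ m, ∃ φ, t ≤ Fv K m φ := by
      intro m
      obtain ⟨φ, hφ⟩ := lt_iSup_iff.mp (lt_of_lt_of_le ht2 (hLm m))
      exact ⟨φ, hφ.le⟩
    obtain ⟨φ, hφ⟩ := exists_phi_star hcompact hK hne
    obtain ⟨m, hm⟩ := core_contradiction hcompact hK hV hsucc hc1 φ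
    have hFle : Fv K m φ ≤ Rec φ (iH φ V c) m [] +
        Rec φ (iS φ V c (tree (K m) m)) m [] := by
      rw [← Rec_add]
      exact Rec_mono φ (iB_le_iH_add_iS φ V c _) m []
    rw [hm, add_zero] at hFle
    have h1 : t ≤ Rec φ (iH φ V c) m [] := le_trans (hφ m) hFle
    have h2 : c * t ≤ V [] := le_trans (mul_le_mul_right h1 c) (ville_root φ V c hV m)
    have h3 : V [] < c * t := by
      rw [mul_comm]
      exact (ENNReal.div_lt_iff (Or.inl hc0) (Or.inl hcltop)).mp ht1
    exact absurd (lt_of_lt_of_le h3 h2) (lt_irrefl _)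
  by_contra hfin
  push_neg at hfin
  have hLne : L ≠ ⊤ := (lt_of_le_of_lt hL1 ENNReal.one_lt_top).ne
  have hL0 : L ≠ 0 := by
    intro h
    rw [h] at hfin
    exact absurd hfin (by simp)
  have hVL : V [] / L < 1 := by
    rw [ENNReal.div_lt_iff (Or.inl hL0) (Or.inl hLne), one_mul]
    exact hfin
  obtain ⟨c, hc1', hc2'⟩ := exists_between hVL
  have hcpos : c ≠ 0 := ne_of_gt (lt_of_le_of_lt (zero_le) hc1')
  have hkey := key c hcpos hc2'
  have hVc : V [] < c * L :=
    (ENNReal.div_lt_iff (Or.inl hL0) (Or.inl hLne)).mp hc1'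
  exact absurd (lt_of_lt_of_le hVc hkey) (lt_irrefl _)

end PreqAux

/-- Upper game-theoretic probability is continuous from above on compact sets:
for a decreasing sequence of compact subsets of Π (with its product topology),
UpProb(⋂ᵢ Kᵢ) = limᵢ UpProb(Kᵢ). -/
theorem upProb_continuous_from_above_on_compacts (K : ℕ → Set PreqInf)
    (hcompact : ∀ i, IsCompact (K i)) (hK : Antitone K) :
    Filter.Tendsto (fun i => UpProb (K i)) Filter.atTop
      (nhds (UpProb (⋂ i, K i))) := by
  have hmono : Antitone fun i => UpProb (K i) := fun i j hij =>
    PreqAux.upProb_mono (hK hij)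
  have htend := tendsto_atTop_iInf hmono
  have heq : (⨅ i, UpProb (K i)) = UpProb (⋂ i, K i) :=
    le_antisymm (PreqAux.iInf_upProb_le hcompact hK)
      (le_iInf fun i => PreqAux.upProb_mono (Set.iInter_subset K i))
  rwa [heq] at htend
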